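/- arXiv:2211.01248 — 3 statements merged into one kernel-verified Lean document; each statement's English description precedes it below -/
import Mathlib

section
/- Non-integrality of the Krawtchouk pseudoprobability polytope (Proposition 5.1): assume k₀ ≥ 2 and ℓ ≥ 1. Then there exists a function p from the subspaces of F^n to ℝ that is feasible for the distance-constrained pseudoprobability program at level ℓ and satisfies p(S) < 0 for some subspace S; in particular, the feasible polytope contains points that are not probability distributions (hence not convex combinations of true solutions). -/
open Classical

noncomputable section

/-- A subspace `C ≤ F^n` has minimum distance at least `d` if every nonzero
codeword has Hamming weight at least `d`. -/
def MinDistGe (n d : ℕ) (F : Type) [Field F] [Fintype F]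
    (C : Submodule F (Fin n → F)) : Prop :=
  ∀ w ∈ C, w ≠ 0 → d ≤ hammingNorm w

/-- `k₀`: the maximum dimension of a subspace of `F^n` of minimum distance at
least `d`. -/
def kzero (n d : ℕ) (F : Type) [Field F] [Fintype F] : ℕ :=
  sSup {k : ℕ | ∃ C : Submodule F (Fin n → F), MinDistGe n d F C ∧ Module.finrank F C = k}

/-- Feasibility for the distance-constrained pseudoprobability program at level `ℓ`. -/
def PseudoFeasibleDist (n ℓ d : ℕ) (F : Type) [Field F] [Fintype F]
    (p : Submodule F (Fin n → F) → ℝ) : Prop :=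
  (∑ S : Submodule F (Fin n → F), p S) = 1 ∧
  (∀ S : Submodule F (Fin n → F), (∃ w ∈ S, w ≠ 0 ∧ hammingNorm w ≤ d - 1) → p S = 0) ∧
  (∀ U : Submodule F (Fin n → F),
      0 ≤ ∑ S : Submodule F (Fin n → F),
        if S ≤ U then (Fintype.card S : ℝ) ^ ℓ * p S else 0) ∧
  (∀ U : Submodule F (Fin n → F),
      0 ≤ ∑ S : Submodule F (Fin n → F), if U ≤ S then p S else 0)

/-- Sum over a fintype of a function vanishing outside three distinct points. -/
lemma sum_eq_three_aux {α : Type*} [Fintype α] [DecidableEq α] (a b c : α)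
    (hab : a ≠ b) (hac : a ≠ c) (hbc : b ≠ c) (g : α → ℝ)
    (h0 : ∀ x, x ≠ a → x ≠ b → x ≠ c → g x = 0) :
    ∑ x, g x = g a + g b + g c := by
  have h1 : ∑ x, g x = ∑ x ∈ ({a, b, c} : Finset α), g x := by
    refine (Finset.sum_subset (Finset.subset_univ _) ?_).symm
    intro x _ hx
    simp only [Finset.mem_insert, Finset.mem_singleton] at hx
    push_neg at hx
    exact h0 x hx.1 hx.2.1 hx.2.2
  rw [h1, Finset.sum_insert (by simp [hab, hac]),
    Finset.sum_insert (by simp [hbc]), Finset.sum_singleton]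
  ring

/-- **Non-integrality of the Krawtchouk pseudoprobability polytope
(Proposition 5.1).** If `k₀ ≥ 2` and `ℓ ≥ 1`, there is a feasible solution of
the distance-constrained pseudoprobability program at level `ℓ` taking a
negative value at some subspace. -/
theorem kraw_polytope_not_integral
    (n ℓ d : ℕ) (hn : 1 ≤ n) (hd : 1 ≤ d) (hdn : d ≤ n) (hl : 1 ≤ ℓ)
    (F : Type) [Field F] [Fintype F]
    (hk : 2 ≤ kzero n d F) :
    ∃ p : Submodule F (Fin n → F) → ℝ, PseudoFeasibleDist n ℓ d F p ∧
      ∃ S : Submodule F (Fin n → F), p S < 0 := by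
  classical
  -- extract a code `C` of dimension `k₀ ≥ 2` with min distance at least `d`
  have hne : (0 : ℕ) ∈ {k : ℕ | ∃ C : Submodule F (Fin n → F),
      MinDistGe n d F C ∧ Module.finrank F C = k} := by
    refine ⟨⊥, ?_, by simp⟩
    intro w hw hw0
    exact absurd (by simpa using hw) hw0
  have hbdd : BddAbove {k : ℕ | ∃ C : Submodule F (Fin n → F),
      MinDistGe n d F C ∧ Module.finrank F C = k} := by
    refine ⟨n, ?_⟩
    rintro k ⟨C, -, rfl⟩
    exact (Submodule.finrank_le C).trans_eq (Module.finrank_fin_fun F)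
  obtain ⟨C, hCd, hCrank⟩ := Nat.sSup_mem ⟨0, hne⟩ hbdd
  have hC2 : 2 ≤ Module.finrank F C := by rw [hCrank]; exact hk
  -- a nonzero vector and the line through it
  have hCbot : C ≠ ⊥ := by
    intro h
    rw [h] at hC2
    simp at hC2
  obtain ⟨v, hvC, hv0⟩ := (Submodule.ne_bot_iff C).mp hCbot
  set L : Submodule F (Fin n → F) := Submodule.span F {v} with hLdef
  have hLC : L ≤ C := Submodule.span_le.mpr (Set.singleton_subset_iff.mpr hvC)
  have hL1 : Module.finrank F L = 1 := finrank_span_singleton hv0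
  have hLneC : L ≠ C := by
    intro h
    rw [← h, hL1] at hC2
    omega
  have hLbot : L ≠ ⊥ := by
    rw [hLdef, Ne, Submodule.span_singleton_eq_bot]
    exact hv0
  set ε : ℝ := ((Fintype.card L : ℝ) ^ ℓ)⁻¹ with hεdef
  have hcardL : (0 : ℝ) < (Fintype.card L : ℝ) := by
    exact_mod_cast Fintype.card_pos
  have hε : 0 < ε := by positivity
  have hεcancel : (Fintype.card L : ℝ) ^ ℓ * ε = 1 := by
    rw [hεdef]
    exact mul_inv_cancel₀ (by positivity)
  set p : Submodule F (Fin n → F) → ℝ :=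
    fun S => if S = ⊥ then 1 else if S = L then -ε else if S = C then ε else 0 with hpdef
  have hp_zero : ∀ S, S ≠ ⊥ → S ≠ L → S ≠ C → p S = 0 := by
    intro S h1 h2 h3
    simp [hpdef, h1, h2, h3]
  have hpb : p ⊥ = 1 := by simp [hpdef]
  have hpL : p L = -ε := by simp [hpdef, hLbot]
  have hpC : p C = ε := by simp [hpdef, hCbot, hLneC.symm]
  refine ⟨p, ⟨?_, ?_, ?_, ?_⟩, L, by rw [hpL]; linarith⟩
  · -- total mass 1
    rw [sum_eq_three_aux ⊥ L C hLbot.symm hCbot.symm hLneC p hp_zero, hpb, hpL, hpC]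
    ring
  · -- vanishing on subspaces with a low-weight nonzero vector
    rintro S ⟨w, hwS, hw0, hwd⟩
    have hSC : S ≠ C := by
      rintro rfl
      have := hCd w hwS hw0
      omega
    have hSL : S ≠ L := by
      rintro rfl
      have := hCd w (hLC hwS) hw0
      omega
    have hSbot : S ≠ ⊥ := by
      rintro rfl
      exact hw0 (by simpa using hwS)
    exact hp_zero S hSbot hSL hSC
  · -- "moment" constraints
    intro U
    rw [sum_eq_three_aux ⊥ L C hLbot.symm hCbot.symm hLneC _
      (fun x h1 h2 h3 => by rw [hp_zero x h1 h2 h3]; simp)]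
    have hcb : (Fintype.card (⊥ : Submodule F (Fin n → F)) : ℝ) = 1 := by
      norm_cast
      simp
    have hCnn : (0:ℝ) ≤ (Fintype.card C : ℝ) ^ ℓ * ε := by positivity
    rw [hpb, hpL, hpC, hcb]
    by_cases hLU : L ≤ U
    · by_cases hCU : C ≤ U
      · simp only [bot_le, if_true, hLU, hCU, one_pow, mul_one, mul_neg, if_pos]
        linarith only [hεcancel, hCnn]
      · simp [hLU, hCU, mul_neg]
        linarith only [hεcancel]
    · have hCU : ¬ C ≤ U := fun h => hLU (hLC.trans h)
      simp [hLU, hCU]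
  · -- "upward" constraints
    intro U
    rw [sum_eq_three_aux ⊥ L C hLbot.symm hCbot.symm hLneC _
      (fun x h1 h2 h3 => by rw [hp_zero x h1 h2 h3]; simp)]
    rw [hpb, hpL, hpC]
    by_cases hUL : U ≤ L
    · have hUC : U ≤ C := hUL.trans hLC
      by_cases hUb : U ≤ ⊥ <;> simp [hUL, hUC, hUb] <;> linarith only [hε]
    · have hUb : ¬ U ≤ ⊥ := fun h => hUL (h.trans bot_le)
      by_cases hUC : U ≤ C <;> simp [hUL, hUC, hUb] <;> linarith only [hε]
end
end

section
/- Any non-integral solution eventually violates a Fourier constraint (Proposition 5.2): let p be a function from the subspaces of F^n to ℝ such that p(S) < 0 for some subspace S, and let U be a subspace with p(U) < 0 whose dimension is maximal among subspaces with negative p-value. Then there exists L ∈ ℕ such that for every ℓ' ≥ L one has ∑_{S : S ≤ U} |S|^{ℓ'} · p(S) < 0. In particular, for every ℓ ∈ ℕ there exists ℓ' ≥ ℓ at which p violates the level-ℓ' Fourier constraint at U. -/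
open Classical

/-- **Any non-integral solution eventually violates a Fourier constraint
(Proposition 5.2).** If `p U < 0` and `U` has maximal dimension among subspaces
with negative `p`-value, then for all sufficiently large `ℓ'` the level-`ℓ'`
Fourier constraint at `U` is violated; in particular for every `ℓ` there is
some `ℓ' ≥ ℓ` at which `p` violates the level-`ℓ'` Fourier constraint at `U`. -/
theorem noninteg_eventually_infeasible
    (n : ℕ) (hn : 1 ≤ n) (F : Type) [Field F] [Fintype F]
    (p : Submodule F (Fin n → F) → ℝ)
    (U : Submodule F (Fin n → F)) (hU : p U < 0)
    (hmax : ∀ T : Submodule F (Fin n → F), p T < 0 →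
      Module.finrank F T ≤ Module.finrank F U) :
    (∃ L : ℕ, ∀ ℓ' : ℕ, L ≤ ℓ' →
      (∑ S : Submodule F (Fin n → F),
        if S ≤ U then (Fintype.card S : ℝ) ^ ℓ' * p S else 0) < 0) ∧
    (∀ ℓ : ℕ, ∃ ℓ' : ℕ, ℓ ≤ ℓ' ∧
      (∑ S : Submodule F (Fin n → F),
        if S ≤ U then (Fintype.card S : ℝ) ^ ℓ' * p S else 0) < 0) := by
    classical
  set q : ℕ := Fintype.card F with hqdef
  have hq1 : 1 < q := Fintype.one_lt_card
  have hq1R : (1 : ℝ) < (q : ℝ) := by exact_mod_cast hq1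
  set d : ℕ := Module.finrank F U with hddef
  have hcardU : (Fintype.card U : ℝ) = (q : ℝ) ^ d := by
    have := Module.card_eq_pow_finrank (K := F) (V := U)
    exact_mod_cast this
  have hcardS : ∀ S : Submodule F (Fin n → F), S ≤ U → S ≠ U →
      (Fintype.card S : ℝ) ≤ (q : ℝ) ^ (d - 1) ∧ 1 ≤ d := by
    intro S hle hne
    have hlt : S < U := lt_of_le_of_ne hle hne
    have hr : Module.finrank F S < d := Submodule.finrank_lt_finrank_of_lt hlt
    have hd1 : 1 ≤ d := Nat.one_le_iff_ne_zero.mpr (by omega)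
    have hS : (Fintype.card S : ℝ) = (q : ℝ) ^ (Module.finrank F S) := by
      have := Module.card_eq_pow_finrank (K := F) (V := S)
      exact_mod_cast this
    refine ⟨?_, hd1⟩
    rw [hS]
    exact pow_le_pow_right₀ (le_of_lt hq1R) (by omega)
  set C : ℝ := ∑ S ∈ Finset.univ.erase U, (if S ≤ U then |p S| else 0) with hCdef
  have hC0 : 0 ≤ C := Finset.sum_nonneg (by intro S _; positivity)
  have key : ∀ ℓ' : ℕ,
      (∑ S : Submodule F (Fin n → F),
        if S ≤ U then (Fintype.card S : ℝ) ^ ℓ' * p S else 0)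
      ≤ ((q : ℝ) ^ d) ^ ℓ' * p U + ((q : ℝ) ^ (d - 1)) ^ ℓ' * C := by
    intro ℓ'
    rw [← Finset.add_sum_erase _ _ (Finset.mem_univ U)]
    have hUterm : (if U ≤ U then (Fintype.card U : ℝ) ^ ℓ' * p U else 0)
        = ((q : ℝ) ^ d) ^ ℓ' * p U := by
      rw [if_pos le_rfl, hcardU]
    rw [hUterm, hCdef, Finset.mul_sum]
    refine add_le_add (le_refl _) (Finset.sum_le_sum ?_)
    intro S hS
    have hSne : S ≠ U := Finset.ne_of_mem_erase hS
    by_cases hle : S ≤ U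
    · rw [if_pos hle, if_pos hle]
      obtain ⟨hcb, -⟩ := hcardS S hle hSne
      calc (Fintype.card S : ℝ) ^ ℓ' * p S
          ≤ (Fintype.card S : ℝ) ^ ℓ' * |p S| := by
            have : (0:ℝ) ≤ (Fintype.card S : ℝ) ^ ℓ' := by positivity
            exact mul_le_mul_of_nonneg_left (le_abs_self _) this
        _ ≤ ((q : ℝ) ^ (d - 1)) ^ ℓ' * |p S| := by
            have hpow : (Fintype.card S : ℝ) ^ ℓ' ≤ ((q : ℝ) ^ (d - 1)) ^ ℓ' :=
              pow_le_pow_left₀ (by positivity) hcb ℓ'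
            exact mul_le_mul_of_nonneg_right hpow (abs_nonneg _)
    · simp [hle]
  -- find L
  have main : ∃ L : ℕ, ∀ ℓ' : ℕ, L ≤ ℓ' →
      (∑ S : Submodule F (Fin n → F),
        if S ≤ U then (Fintype.card S : ℝ) ^ ℓ' * p S else 0) < 0 := by
    by_cases hC : C = 0
    · refine ⟨0, fun ℓ' _ => ?_⟩
      have h := key ℓ'
      rw [hC, mul_zero, add_zero] at h
      have hpos : (0:ℝ) < ((q : ℝ) ^ d) ^ ℓ' := by positivity
      exact lt_of_le_of_lt h (mul_neg_of_pos_of_neg hpos hU)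
    · -- C > 0, so some proper S ≤ U exists, hence d ≥ 1
      have hCpos : 0 < C := lt_of_le_of_ne hC0 (Ne.symm hC)
      have hd1 : 1 ≤ d := by
        by_contra hd
        apply hC
        rw [hCdef]
        refine Finset.sum_eq_zero ?_
        intro S hS
        have hSne : S ≠ U := Finset.ne_of_mem_erase hS
        by_cases hle : S ≤ U
        · exact absurd ((hcardS S hle hSne).2) hd
        · simp [hle]
      obtain ⟨L, hL⟩ := pow_unbounded_of_one_lt (C / (-p U)) hq1R
      refine ⟨L, fun ℓ' hℓ' => ?_⟩
      have hqL : (q : ℝ) ^ L ≤ (q : ℝ) ^ ℓ' :=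
        pow_le_pow_right₀ hq1R.le hℓ'
      have hstep : C < (q : ℝ) ^ ℓ' * (-p U) := by
        have hpU : 0 < -p U := neg_pos.mpr hU
        have := lt_of_lt_of_le hL hqL
        calc C = C / (-p U) * (-p U) := (div_mul_cancel₀ C (ne_of_gt hpU)).symm
          _ < (q : ℝ) ^ ℓ' * (-p U) := by
              exact mul_lt_mul_of_pos_right this hpU
      have hfac : ((q : ℝ) ^ d) ^ ℓ' = ((q : ℝ) ^ (d - 1)) ^ ℓ' * (q : ℝ) ^ ℓ' := by
        rw [← mul_pow, ← pow_succ]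
        congr 2
        omega
      have h := key ℓ'
      have hbound : ((q : ℝ) ^ d) ^ ℓ' * p U + ((q : ℝ) ^ (d - 1)) ^ ℓ' * C < 0 := by
        rw [hfac]
        have hpos : (0:ℝ) < ((q : ℝ) ^ (d - 1)) ^ ℓ' := by positivity
        have : (q : ℝ) ^ ℓ' * p U + C < 0 := by nlinarith
        nlinarith
      exact lt_of_le_of_lt h hbound
  obtain ⟨L, hL⟩ := main
  exact ⟨⟨L, hL⟩, fun ℓ => ⟨max ℓ L, le_max_left _ _, hL _ (le_max_right _ _)⟩⟩
end

section
/- Feasibility of true solutions: let C be a subspace of F^n and define a^C : (F^n)^ℓ → ℝ by a^C(x) := 1 if Span(x) ≤ C and a^C(x) := 0 otherwise. Then ∑_{x ∈ (F^n)^ℓ} a^C(x) = |C|^ℓ, and a^C is feasible for the unsymmetrized Krawtchouk LP at level ℓ if and only if C has minimum distance at least d. -/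
open Classical

noncomputable section

/-- `χ_α(x) := ψ(∑_j ⟨α_j, x_j⟩)`. -/
def chi {n ℓ : ℕ} {F : Type} [Field F] [Fintype F] (ψ : AddChar F ℂ)
    (α x : Fin ℓ → Fin n → F) : ℂ :=
  ψ (∑ j, ∑ i, α j i * x j i)

/-- Feasibility for the unsymmetrized Krawtchouk LP at level `ℓ`. -/
def KrawFeasible (n ℓ d : ℕ) (F : Type) [Field F] [Fintype F]
    (ψ : AddChar F ℂ) (a : (Fin ℓ → Fin n → F) → ℝ) : Prop :=
  a 0 = 1 ∧
  (∀ x : Fin ℓ → Fin n → F,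
      (∃ w ∈ Submodule.span F (Set.range x), w ≠ 0 ∧ hammingNorm w ≤ d - 1) → a x = 0) ∧
  (∀ α : Fin ℓ → Fin n → F, ∃ c : ℝ, 0 ≤ c ∧
      (∑ x : Fin ℓ → Fin n → F, (a x : ℂ) * chi ψ α x) = (c : ℂ)) ∧
  (∀ x : Fin ℓ → Fin n → F, 0 ≤ a x)

lemma addChar_map_sum {A M : Type*} [AddCommMonoid A] [CommMonoid M]
    (ψ : AddChar A M) {ι : Type*} (s : Finset ι) (f : ι → A) :
    ψ (∑ i ∈ s, f i) = ∏ i ∈ s, ψ (f i) := by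
  induction s using Finset.cons_induction with
  | empty => simp
  | cons a s ha ih => rw [Finset.sum_cons, Finset.prod_cons, ψ.map_add_eq_mul, ih]

lemma span_range_le_iff {n ℓ : ℕ} {F : Type} [Field F]
    (C : Submodule F (Fin n → F)) (x : Fin ℓ → Fin n → F) :
    Submodule.span F (Set.range x) ≤ C ↔ ∀ j, x j ∈ C := by
  rw [Submodule.span_le, Set.range_subset_iff]
  rfl

/-- **Feasibility of true solutions.** For a subspace `C ≤ F^n`, the true
solution `a^C(x) := 1[Span(x) ≤ C]` has total sum `|C|^ℓ`, and it is feasible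
for the unsymmetrized Krawtchouk LP at level `ℓ` iff `C` has minimum distance
at least `d`. -/
theorem true_solution_feasibility
    (n ℓ d : ℕ) (hn : 1 ≤ n) (hl : 1 ≤ ℓ) (hd : 1 ≤ d) (hdn : d ≤ n)
    (F : Type) [Field F] [Fintype F]
    (ψ : AddChar F ℂ) (hψ : ψ ≠ 1)
    (C : Submodule F (Fin n → F))
    (aC : (Fin ℓ → Fin n → F) → ℝ)
    (haC : ∀ x : Fin ℓ → Fin n → F,
      aC x = if Submodule.span F (Set.range x) ≤ C then 1 else 0) :
    (∑ x : Fin ℓ → Fin n → F, aC x) = (Fintype.card C : ℝ) ^ ℓ ∧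
    (KrawFeasible n ℓ d F ψ aC ↔ ∀ w ∈ C, w ≠ 0 → d ≤ hammingNorm w) := by
  have card_sum : ∑ v : Fin n → F, (if v ∈ C then (1 : ℝ) else 0) = (Fintype.card C : ℝ) := by
    rw [Finset.sum_boole]
    simp [Fintype.card_subtype]
  constructor
  · -- sum = |C|^ℓ
    have key : ∀ x : Fin ℓ → Fin n → F,
        aC x = ∏ j, (if x j ∈ C then (1 : ℝ) else 0) := by
      intro x
      rw [haC x]
      by_cases h : ∀ j, x j ∈ C
      · rw [if_pos ((span_range_le_iff C x).2 h)]
        exact (Finset.prod_eq_one fun j _ => if_pos (h j)).symm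
      · rw [if_neg (fun hle => h ((span_range_le_iff C x).1 hle))]
        push_neg at h
        obtain ⟨j, hj⟩ := h
        exact (Finset.prod_eq_zero (Finset.mem_univ j) (by rw [if_neg hj])).symm
    have hps := Fintype.prod_sum (ι := Fin ℓ) (κ := fun _ => Fin n → F)
      (fun _ v => (if v ∈ C then (1 : ℝ) else 0))
    have hps' : (∑ x : Fin ℓ → Fin n → F, ∏ j, (if x j ∈ C then (1 : ℝ) else 0))
        = ∏ _j : Fin ℓ, ∑ v : Fin n → F, (if v ∈ C then (1 : ℝ) else 0) := hps.symm
    rw [Finset.sum_congr rfl fun x _ => key x, hps']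
    rw [Finset.prod_congr rfl fun j _ => card_sum, Finset.prod_const, Finset.card_univ,
      Fintype.card_fin]
  · constructor
    · -- feasible → min distance
      rintro ⟨h0, hvan, hpos, hnn⟩ w hwC hw0
      by_contra hlt
      push_neg at hlt
      have hle : hammingNorm w ≤ d - 1 := Nat.le_sub_one_of_lt hlt
      set x : Fin ℓ → Fin n → F := fun _ => w with hx
      have hmem : w ∈ Submodule.span F (Set.range x) :=
        Submodule.subset_span ⟨⟨0, hl⟩, rfl⟩
      have h1 : aC x = 0 := hvan x ⟨w, hmem, hw0, hle⟩
      have h2 : aC x = 1 := by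
        rw [haC x, if_pos ((span_range_le_iff C x).2 fun _ => hwC)]
      rw [h1] at h2
      exact one_ne_zero h2.symm
    · -- min distance → feasible
      intro hmin
      refine ⟨?_, ?_, ?_, ?_⟩
      · rw [haC 0, if_pos ((span_range_le_iff C 0).2 fun _ => C.zero_mem)]
      · rintro x ⟨w, hwspan, hw0, hwle⟩
        rw [haC x, if_neg]
        intro hle
        have := hmin w (hle hwspan) hw0
        omega
      · intro α
        set f : Fin ℓ → (Fin n → F) → ℂ :=
          fun j v => (if v ∈ C then (1 : ℂ) else 0) * ψ (∑ i, α j i * v i) with hf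
        have hfac : ∀ x : Fin ℓ → Fin n → F,
            (aC x : ℂ) * chi ψ α x = ∏ j, f j (x j) := by
          intro x
          have hchi : chi ψ α x = ∏ j, ψ (∑ i, α j i * x j i) :=
            addChar_map_sum ψ _ _
          rw [haC x, hchi]
          by_cases h : ∀ j, x j ∈ C
          · rw [if_pos ((span_range_le_iff C x).2 h)]
            push_cast
            rw [one_mul]
            exact Finset.prod_congr rfl fun j _ => by
              simp only [hf]
              rw [if_pos (h j), one_mul]
          · rw [if_neg (fun hle => h ((span_range_le_iff C x).1 hle))]
            push_neg at h
            obtain ⟨j, hj⟩ := h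
            push_cast
            rw [zero_mul]
            exact (Finset.prod_eq_zero (Finset.mem_univ j) (by
              simp only [hf]
              rw [if_neg hj, zero_mul])).symm
        have hfactor : ∀ j : Fin ℓ, ∃ r : ℝ, 0 ≤ r ∧
            (∑ v : Fin n → F, f j v) = (r : ℂ) := by
          intro j
          set φ : AddChar C ℂ := ψ.compAddMonoidHom
            (AddMonoidHom.mk' (fun v : C => ∑ i, α j i * (v : Fin n → F) i)
              (by intro a b
                  simp [mul_add, Finset.sum_add_distrib])) with hφ
          have hsub : (∑ v : Fin n → F, f j v) = ∑ v : C, φ v := by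
            simp only [hf, ite_mul, one_mul, zero_mul]
            rw [← Finset.sum_filter]
            rw [Finset.sum_subtype (p := fun v : Fin n → F => v ∈ C)
              (Finset.univ.filter (fun v : Fin n → F => v ∈ C)) (fun v => by simp)
              (fun v => ψ (∑ i, α j i * v i))]
            rfl
          rw [hsub, AddChar.sum_eq_ite φ]
          by_cases hφ0 : φ = 0
          · exact ⟨Fintype.card C, by positivity, by rw [if_pos hφ0]; push_cast; rfl⟩
          · exact ⟨0, le_refl 0, by rw [if_neg hφ0]; norm_num⟩
        choose r hr0 hr using hfactor
        refine ⟨∏ j, r j, Finset.prod_nonneg fun j _ => hr0 j, ?_⟩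
        have hps : (∑ x : Fin ℓ → Fin n → F, ∏ j, f j (x j))
            = ∏ j : Fin ℓ, ∑ v : Fin n → F, f j v :=
          (Fintype.prod_sum (ι := Fin ℓ) (κ := fun _ => Fin n → F) f).symm
        rw [Finset.sum_congr rfl fun x _ => hfac x, hps,
          Finset.prod_congr rfl fun j _ => hr j]
        push_cast
        rfl
      · intro x
        rw [haC x]
        split_ifs <;> norm_num
end
end
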